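/- Let α ∈ (0, π/2), Δ = Δ(α) and let {T_t}_{t∈Δ} be a C₀-semigroup on a Banach space X. Then the following are equivalent: (1) {T_t}_{t∈Δ} admits a distributionally scrambled set which is residual in X (contains a dense Gδ subset of X); (2) every vector in X \ {0} is distributionally semi-irregular; (3) the whole space X is a distributionally scrambled set for {T_t}_{t∈Δ}. -/

import Mathlib

open MeasureTheory Filter Set

noncomputable section

/-- The complex sector `Δ(α) = {r e^{iθ} : r ≥ 0, |θ| ≤ α}`. -/
def sector (α : ℝ) : Set ℂ := {z : ℂ | |Complex.arg z| ≤ α}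

/-- `Δ_r = {t ∈ Δ(α) : |t| < r}`. -/
def sectorBall (α r : ℝ) : Set ℂ := {z ∈ sector α | ‖z‖ < r}

/-- Upper density of a set `A` with respect to the sector `Δ(α)`. -/
def udens (α : ℝ) (A : Set ℂ) : ℝ :=
  limsup (fun r : ℝ =>
    (volume (A ∩ sectorBall α r)).toReal / (volume (sectorBall α r)).toReal) atTop

/-- Lower density of a set `A` with respect to the sector `Δ(α)`. -/
def ldens (α : ℝ) (A : Set ℂ) : ℝ :=
  liminf (fun r : ℝ =>
    (volume (A ∩ sectorBall α r)).toReal / (volume (sectorBall α r)).toReal) atTop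

/-- The filter expressing `|t| → ∞` along `t ∈ A`. -/
def alongAbs (A : Set ℂ) : Filter ℂ :=
  (atTop.comap (fun z : ℂ => ‖z‖)) ⊓ 𝓟 A

/-- A `C₀`-semigroup of continuous linear operators indexed by the sector `Δ(α)`. -/
structure CZeroSemigroup (α : ℝ) (𝕜 X : Type*) [NontriviallyNormedField 𝕜]
    [NormedAddCommGroup X] [NormedSpace 𝕜 X] where
  T : ℂ → X →L[𝕜] X
  map_zero' : T 0 = ContinuousLinearMap.id 𝕜 X
  map_add' : ∀ s ∈ sector α, ∀ t ∈ sector α, T (s + t) = (T s).comp (T t)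
  cont' : ∀ x : X, ContinuousOn (fun t => T t x) (sector α)

variable {α : ℝ} {𝕜 X : Type*} [NontriviallyNormedField 𝕜]
  [NormedAddCommGroup X] [NormedSpace 𝕜 X]

/-- Distributional sensitivity. -/
def DistSensitive (S : CZeroSemigroup α 𝕜 X) : Prop :=
  ∃ δ > (0:ℝ), ∀ x : X, ∀ ε > (0:ℝ), ∃ y : X, ‖x - y‖ < ε ∧
    udens α {t ∈ sector α | δ < ‖S.T t x - S.T t y‖} = 1

/-- Distributionally unbounded vector. -/
def DistUnbounded (S : CZeroSemigroup α 𝕜 X) (x : X) : Prop :=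
  ∃ A : Set ℂ, A ⊆ sector α ∧ MeasurableSet A ∧ udens α A = 1 ∧
    Tendsto (fun t => ‖S.T t x‖) (alongAbs A) atTop

/-- Distributionally semi-irregular vector. -/
def DistSemiIrregular (S : CZeroSemigroup α 𝕜 X) (x : X) : Prop :=
  ∃ A B : Set ℂ, A ⊆ sector α ∧ B ⊆ sector α ∧ MeasurableSet A ∧ MeasurableSet B ∧
    udens α A = 1 ∧ udens α B = 1 ∧
    Tendsto (fun t => ‖S.T t x‖) (alongAbs A) (nhds 0) ∧
    ∃ δ > (0:ℝ), ∀ t ∈ B, δ ≤ ‖S.T t x‖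

/-- Distributionally irregular vector. -/
def DistIrregular (S : CZeroSemigroup α 𝕜 X) (x : X) : Prop :=
  ∃ A B : Set ℂ, A ⊆ sector α ∧ B ⊆ sector α ∧ MeasurableSet A ∧ MeasurableSet B ∧
    udens α A = 1 ∧ udens α B = 1 ∧
    Tendsto (fun t => ‖S.T t x‖) (alongAbs A) (nhds 0) ∧
    Tendsto (fun t => ‖S.T t x‖) (alongAbs B) atTop

/-- Distributionally chaotic pair. -/
def DistChaoticPair (S : CZeroSemigroup α 𝕜 X) (x y : X) : Prop :=
  ∃ δ > (0:ℝ), ∀ ε > (0:ℝ),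
    udens α {t ∈ sector α | ‖S.T t x - S.T t y‖ < ε} = 1 ∧
    udens α {t ∈ sector α | δ < ‖S.T t x - S.T t y‖} = 1

/-- Distributionally scrambled set. -/
def DistScrambled (S : CZeroSemigroup α 𝕜 X) (K : Set X) : Prop :=
  ∀ x ∈ K, ∀ y ∈ K, x ≠ y → DistChaoticPair S x y

/-! ### Auxiliary material -/

/-- The density ratio at radius `r`. -/
def dratio (α : ℝ) (A : Set ℂ) (r : ℝ) : ℝ :=
  (volume (A ∩ sectorBall α r)).toReal / (volume (sectorBall α r)).toReal

lemma measurableSet_sector (α : ℝ) : MeasurableSet (sector α) := by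
  have : sector α = (fun z => |Complex.arg z|) ⁻¹' (Iic α) := rfl
  rw [this]
  exact (Complex.measurable_arg.abs) measurableSet_Iic

lemma measurableSet_sectorBall (α r : ℝ) : MeasurableSet (sectorBall α r) := by
  have : sectorBall α r = sector α ∩ (fun z : ℂ => ‖z‖) ⁻¹' (Iio r) := rfl
  rw [this]
  exact (measurableSet_sector α).inter (continuous_norm.measurable measurableSet_Iio)

lemma sectorBall_subset_ball (α r : ℝ) : sectorBall α r ⊆ Metric.ball (0:ℂ) r := by
  intro z hz
  simpa [Metric.mem_ball, Complex.dist_eq] using hz.2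

lemma volume_sectorBall_ne_top (α r : ℝ) : volume (sectorBall α r) ≠ ⊤ :=
  ne_top_of_le_ne_top (measure_ball_lt_top (x := (0:ℂ)) (r := r)).ne
    (measure_mono (sectorBall_subset_ball α r))

lemma ball_subset_sectorBall (hα : 0 < α) (hα' : α < Real.pi / 2) {r : ℝ} (hr : 0 < r) :
    Metric.ball ((r/2 : ℝ) : ℂ) (Real.sin α / 8 * r) ⊆ sectorBall α r := by
  have hs : 0 < Real.sin α := Real.sin_pos_of_pos_of_lt_pi hα (hα'.trans_le (by
    have := Real.pi_pos; linarith))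
  have hs1 : Real.sin α ≤ 1 := Real.sin_le_one α
  intro z hz
  rw [Metric.mem_ball, Complex.dist_eq] at hz
  set ε : ℝ := Real.sin α / 8 with hε
  have hε4 : ε ≤ 1/8 := by rw [hε]; linarith
  have hεpos : 0 < ε := by positivity
  have him : |z.im| < ε * r := by
    calc |z.im| = |(z - ((r/2:ℝ):ℂ)).im| := by simp
    _ ≤ ‖z - ((r/2:ℝ):ℂ)‖ := Complex.abs_im_le_norm _
    _ < ε * r := hz
  have hre : r/2 - ε * r < z.re := by
    have h1 : |z.re - r/2| < ε * r := by
      calc |z.re - r/2| = |(z - ((r/2:ℝ):ℂ)).re| := by simp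
      _ ≤ ‖z - ((r/2:ℝ):ℂ)‖ := Complex.abs_re_le_norm _
      _ < ε * r := hz
    linarith [(abs_lt.mp h1).1]
  have hrepos : r/4 < z.re := by nlinarith
  have habs : r/4 < ‖z‖ := lt_of_lt_of_le hrepos (Complex.re_le_norm z)
  have habspos : 0 < ‖z‖ := lt_trans (by positivity) habs
  have hratio : |z.im / ‖z‖| ≤ Real.sin α := by
    rw [abs_div, abs_of_pos habspos, div_le_iff₀ habspos]
    calc |z.im| ≤ ε * r := him.le
    _ ≤ Real.sin α * (r/4) := by rw [hε]; nlinarith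
    _ ≤ Real.sin α * ‖z‖ := by nlinarith
  have hb := abs_le.mp hratio
  constructor
  · show |Complex.arg z| ≤ α
    have harg : Complex.arg z = Real.arcsin (z.im / ‖z‖) := by
      rw [Complex.arg, if_pos (by linarith : (0:ℝ) ≤ z.re)]
    have hsin : Real.arcsin (Real.sin α) = α :=
      Real.arcsin_sin (by linarith [Real.pi_pos]) hα'.le
    rw [harg, abs_le]
    constructor
    · have h2 : Real.arcsin (-(Real.sin α)) ≤ Real.arcsin (z.im / ‖z‖) :=
        Real.monotone_arcsin hb.1
      rwa [Real.arcsin_neg, hsin] at h2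
    · have h2 : Real.arcsin (z.im / ‖z‖) ≤ Real.arcsin (Real.sin α) :=
        Real.monotone_arcsin hb.2
      rwa [hsin] at h2
  · show ‖z‖ < r
    have h3 : ‖z‖ ≤ ‖((r/2:ℝ):ℂ)‖ + ‖z - ((r/2:ℝ):ℂ)‖ := by
      calc ‖z‖ = ‖((r/2:ℝ):ℂ) + (z - ((r/2:ℝ):ℂ))‖ := by ring_nf
      _ ≤ _ := norm_add_le _ _
    rw [Complex.norm_real, Real.norm_eq_abs, abs_of_pos (by linarith)] at h3
    nlinarith

lemma volume_sectorBall_lb (hα : 0 < α) (hα' : α < Real.pi / 2) {r : ℝ} (hr : 0 < r) :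
    ENNReal.ofReal (Real.sin α / 8 * r) ^ 2 * NNReal.pi ≤ volume (sectorBall α r) := by
  rw [← Complex.volume_ball]
  exact measure_mono (ball_subset_sectorBall hα hα' hr)

lemma volume_sectorBall_lb_real (hα : 0 < α) (hα' : α < Real.pi / 2) {r : ℝ} (hr : 0 < r) :
    (Real.sin α / 8 * r) ^ 2 * Real.pi ≤ (volume (sectorBall α r)).toReal := by
  have h := volume_sectorBall_lb hα hα' hr
  have h2 := ENNReal.toReal_mono (volume_sectorBall_ne_top α r) h
  have hs : 0 ≤ Real.sin α :=
    (Real.sin_pos_of_pos_of_lt_pi hα (hα'.trans_le (by have := Real.pi_pos; linarith))).le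
  rw [ENNReal.toReal_mul, ENNReal.toReal_pow, ENNReal.toReal_ofReal (by positivity),
    ENNReal.coe_toReal, NNReal.coe_real_pi] at h2
  exact h2

lemma volume_sectorBall_ub_real (α : ℝ) {r : ℝ} (hr : 0 ≤ r) :
    (volume (sectorBall α r)).toReal ≤ r ^ 2 * Real.pi := by
  have h2 : (volume (sectorBall α r)).toReal ≤ (volume (Metric.ball (0:ℂ) r)).toReal :=
    ENNReal.toReal_mono measure_ball_lt_top.ne (measure_mono (sectorBall_subset_ball α r))
  rwa [Complex.volume_ball, ENNReal.toReal_mul, ENNReal.toReal_pow,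
    ENNReal.toReal_ofReal hr, ENNReal.coe_toReal, NNReal.coe_real_pi] at h2

lemma corr_tendsto (hα : 0 < α) (hα' : α < Real.pi / 2) (b : ℝ) :
    Tendsto (fun r => (volume (sectorBall α b)).toReal / (volume (sectorBall α r)).toReal)
      atTop (nhds 0) := by
  have hs : 0 < Real.sin α := Real.sin_pos_of_pos_of_lt_pi hα (hα'.trans_le (by
    have := Real.pi_pos; linarith))
  set c : ℝ := (Real.sin α / 8) ^ 2 * Real.pi with hc
  have hcpos : 0 < c := by have := Real.pi_pos; positivity
  set M : ℝ := (volume (sectorBall α b)).toReal with hM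
  have hM0 : 0 ≤ M := ENNReal.toReal_nonneg
  apply squeeze_zero' (g := fun r => M / (c * r ^ 2))
  · exact Eventually.of_forall (fun r => by positivity)
  · filter_upwards [eventually_gt_atTop (0:ℝ)] with r hr
    have hlb : c * r ^ 2 ≤ (volume (sectorBall α r)).toReal := by
      have h := volume_sectorBall_lb_real hα hα' hr
      calc c * r ^ 2 = (Real.sin α / 8 * r) ^ 2 * Real.pi := by ring
      _ ≤ _ := h
    exact div_le_div_of_nonneg_left hM0 (by positivity) hlb
  · apply Tendsto.div_atTop (tendsto_const_nhds)
    exact (tendsto_pow_atTop (two_ne_zero)).const_mul_atTop hcpos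

lemma dratio_nonneg (α : ℝ) (A : Set ℂ) (r : ℝ) : 0 ≤ dratio α A r :=
  div_nonneg ENNReal.toReal_nonneg ENNReal.toReal_nonneg

lemma dratio_le_one (α : ℝ) (A : Set ℂ) (r : ℝ) : dratio α A r ≤ 1 := by
  apply div_le_one_of_le₀
  · exact ENNReal.toReal_mono (volume_sectorBall_ne_top α r)
      (measure_mono inter_subset_right)
  · exact ENNReal.toReal_nonneg

lemma dratio_mono {A B : Set ℂ} (h : A ⊆ B) (r : ℝ) : dratio α A r ≤ dratio α B r :=
  div_le_div_of_nonneg_right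
    (ENNReal.toReal_mono
      (ne_top_of_le_ne_top (volume_sectorBall_ne_top α r) (measure_mono inter_subset_right))
      (measure_mono (inter_subset_inter_left _ h)))
    ENNReal.toReal_nonneg

lemma udens_eq_one_of_freq {A : Set ℂ}
    (h : ∀ ε > (0:ℝ), ∃ᶠ r in atTop, 1 - ε < dratio α A r) : udens α A = 1 := by
  have hbdd : IsBoundedUnder (· ≤ ·) atTop (dratio α A) :=
    isBoundedUnder_of ⟨1, fun r => dratio_le_one α A r⟩
  have hcob : IsCoboundedUnder (· ≤ ·) atTop (dratio α A) :=
    IsBoundedUnder.isCoboundedUnder_le (isBoundedUnder_of ⟨0, fun r => dratio_nonneg α A r⟩)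
  have hle : udens α A ≤ 1 :=
    limsup_le_of_le hcob (Eventually.of_forall (fun r => dratio_le_one α A r))
  have hge : 1 ≤ udens α A := by
    apply le_of_forall_pos_le_add
    intro ε hε
    have h2 := le_limsup_of_frequently_le ((h ε hε).mono (fun r hr => hr.le)) hbdd
    show (1:ℝ) ≤ udens α A + ε
    have hud : udens α A = limsup (dratio α A) atTop := rfl
    rw [hud]; linarith
  linarith

lemma freq_of_udens_eq_one {A : Set ℂ} (h : udens α A = 1) :
    ∀ ε > (0:ℝ), ∃ᶠ r in atTop, 1 - ε < dratio α A r := by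
  intro ε hε
  have hcob : IsCoboundedUnder (· ≤ ·) atTop (dratio α A) :=
    IsBoundedUnder.isCoboundedUnder_le (isBoundedUnder_of ⟨0, fun r => dratio_nonneg α A r⟩)
  apply frequently_lt_of_lt_limsup hcob
  have hud : udens α A = limsup (dratio α A) atTop := rfl
  rw [← hud, h]; linarith

lemma udens_eq_one_mono {A B : Set ℂ} (hAB : A ⊆ B) (hA : udens α A = 1) : udens α B = 1 :=
  udens_eq_one_of_freq fun ε hε =>
    (freq_of_udens_eq_one hA ε hε).mono (fun r hr => hr.trans_le (dratio_mono hAB r))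

lemma dratio_diff {A B : Set ℂ} {b r : ℝ} (h : A ∩ sectorBall α r ⊆ B ∪ sectorBall α b) :
    dratio α A r - (volume (sectorBall α b)).toReal / (volume (sectorBall α r)).toReal
      ≤ dratio α B r := by
  have hsub : A ∩ sectorBall α r ⊆ (B ∩ sectorBall α r) ∪ sectorBall α b := by
    intro x hx
    rcases h hx with hB | hb
    · exact Or.inl ⟨hB, hx.2⟩
    · exact Or.inr hb
  have hnum : (volume (A ∩ sectorBall α r)).toReal
      ≤ (volume (B ∩ sectorBall α r)).toReal + (volume (sectorBall α b)).toReal := by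
    calc (volume (A ∩ sectorBall α r)).toReal
        ≤ (volume ((B ∩ sectorBall α r) ∪ sectorBall α b)).toReal :=
          ENNReal.toReal_mono (ne_top_of_le_ne_top
            (ENNReal.add_ne_top.mpr ⟨ne_top_of_le_ne_top (volume_sectorBall_ne_top α r)
              (measure_mono inter_subset_right), volume_sectorBall_ne_top α b⟩)
            (measure_union_le _ _)) (measure_mono hsub)
      _ ≤ _ := by
          refine le_trans (ENNReal.toReal_mono ?_ (measure_union_le _ _)) ?_
          · exact ENNReal.add_ne_top.mpr ⟨ne_top_of_le_ne_top (volume_sectorBall_ne_top α r)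
              (measure_mono inter_subset_right), volume_sectorBall_ne_top α b⟩
          · rw [ENNReal.toReal_add (ne_top_of_le_ne_top (volume_sectorBall_ne_top α r)
              (measure_mono inter_subset_right)) (volume_sectorBall_ne_top α b)]
  rw [sub_le_iff_le_add]
  unfold dratio
  rw [← add_div]
  exact div_le_div_of_nonneg_right hnum ENNReal.toReal_nonneg

lemma udens_inter_abs_ge (hα : 0 < α) (hα' : α < Real.pi/2) {A : Set ℂ}
    (hA : A ⊆ sector α) (h : udens α A = 1) (b : ℝ) :
    udens α (A ∩ {t | b ≤ ‖t‖}) = 1 := by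
  apply udens_eq_one_of_freq
  intro ε hε
  have h1 := freq_of_udens_eq_one h (ε/2) (by linarith)
  have h2 : ∀ᶠ r in atTop,
      (volume (sectorBall α b)).toReal / (volume (sectorBall α r)).toReal < ε/2 :=
    (corr_tendsto hα hα' b).eventually (Iio_mem_nhds (show (0:ℝ) < ε/2 by linarith))
  apply (h1.and_eventually h2).mono
  rintro r ⟨hr1, hr2⟩
  have hd := dratio_diff (α := α)
    (A := A) (B := A ∩ {t | b ≤ ‖t‖}) (b := b) (r := r) ?_
  · linarith
  · intro t ht
    by_cases hab : b ≤ ‖t‖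
    · exact Or.inl ⟨ht.1, hab⟩
    · exact Or.inr ⟨hA ht.1, lt_of_not_ge hab⟩

lemma isGδ_preimage {Y Z : Type*} [TopologicalSpace Y] [TopologicalSpace Z]
    {f : Y → Z} (hf : Continuous f) {s : Set Z} (hs : IsGδ s) : IsGδ (f ⁻¹' s) := by
  obtain ⟨U, hU, rfl⟩ := isGδ_iff_eq_iInter_nat.mp hs
  rw [preimage_iInter]
  exact IsGδ.iInter fun n => ((hU n).preimage hf).isGδ

lemma measurableSet_sep {g : ℂ → X} (hg : ContinuousOn g (sector α)) {O : Set X}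
    (hO : IsOpen O) : MeasurableSet {t ∈ sector α | g t ∈ O} := by
  obtain ⟨u, hu, huv⟩ := (continuousOn_iff'.mp hg) O hO
  have heq : {t ∈ sector α | g t ∈ O} = u ∩ sector α := by
    rw [← huv]; ext t; exact ⟨fun h => ⟨h.2, h.1⟩, fun h => ⟨h.2, h.1⟩⟩
  rw [heq]
  exact hu.measurableSet.inter (measurableSet_sector α)

lemma exists_bound_of_alongAbs {A : Set ℂ} {f : ℂ → ℝ} {ε : ℝ} (hε : 0 < ε)
    (h : Tendsto f (alongAbs A) (nhds 0)) :
    ∃ b : ℝ, ∀ t, b ≤ ‖t‖ → t ∈ A → f t < ε := by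
  have hmem : f ⁻¹' (Iio ε) ∈ alongAbs A := h (Iio_mem_nhds hε)
  rw [alongAbs, mem_inf_principal, mem_comap] at hmem
  obtain ⟨s, hs, hsub⟩ := hmem
  obtain ⟨b, hb⟩ := mem_atTop_sets.mp hs
  exact ⟨b, fun t ht htA => hsub (hb _ ht) htA⟩

/-- The key construction: a vector whose orbit is distributionally small and
distributionally large is distributionally semi-irregular. -/
lemma semiirr_construct (hα : 0 < α) (hα' : α < Real.pi / 2)
    (S : CZeroSemigroup α 𝕜 X) (v : X)
    (hclose : ∀ ε > (0:ℝ), udens α {t ∈ sector α | ‖S.T t v‖ < ε} = 1)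
    (hfar : ∃ δ > (0:ℝ), udens α {t ∈ sector α | δ < ‖S.T t v‖} = 1) :
    DistSemiIrregular S v := by
  classical
  obtain ⟨δ, hδ, hBu⟩ := hfar
  set B : Set ℂ := {t ∈ sector α | δ < ‖S.T t v‖} with hBdef
  have hs : 0 < Real.sin α := Real.sin_pos_of_pos_of_lt_pi hα (hα'.trans_le (by
    have := Real.pi_pos; linarith))
  set c : ℝ := (Real.sin α / 8) ^ 2 * Real.pi with hc
  have hcpos : 0 < c := by have := Real.pi_pos; positivity
  -- the family of "small orbit" sets
  set C : ℕ → Set ℂ := fun n => {t ∈ sector α | ‖S.T t v‖ < 1/((n:ℝ)+1)} with hCdef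
  have hC : ∀ n, udens α (C n) = 1 := fun n => hclose _ (by positivity)
  have hCsub : ∀ n, C n ⊆ sector α := fun n t ht => ht.1
  have hCmeas : ∀ n, MeasurableSet (C n) := by
    intro n
    exact measurableSet_sep (S.cont' v)
      (isOpen_lt continuous_norm continuous_const : IsOpen {w : X | ‖w‖ < 1/((n:ℝ)+1)})
  -- choose radii
  have hex : ∀ (n : ℕ) (ρ : ℝ), ∃ r', (ρ + 1 ≤ r' ∧ ((n:ℝ)+2)*ρ ≤ r') ∧
      1 - 1/((n:ℝ)+1) < dratio α (C n) r' := by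
    intro n ρ
    have hfr := freq_of_udens_eq_one (hC n) (1/((n:ℝ)+1)) (by positivity)
    obtain ⟨r', hr', hP⟩ := frequently_atTop.mp hfr (max (ρ+1) (((n:ℝ)+2)*ρ))
    exact ⟨r', ⟨le_trans (le_max_left _ _) hr', le_trans (le_max_right _ _) hr'⟩, hP⟩
  choose step hstep hstepd using hex
  set r : ℕ → ℝ := fun n => Nat.rec (motive := fun _ => ℝ) 1 (fun n ih => step n ih) n with hrdef
  have hr0 : r 0 = 1 := rfl
  have hrsucc : ∀ n, r (n+1) = step n (r n) := fun n => rfl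
  have hr1 : ∀ n, 1 ≤ r n := by
    intro n
    induction n with
    | zero => exact le_refl 1
    | succ k ih =>
        have := (hstep k (r k)).1
        rw [hrsucc k]; linarith
  have hrmono : StrictMono r := by
    apply strictMono_nat_of_lt_succ
    intro n
    have := (hstep n (r n)).1
    rw [hrsucc n]; linarith
  have hrge : ∀ n : ℕ, (n:ℝ) ≤ r n := by
    intro n
    induction n with
    | zero => simp [hr0]
    | succ k ih =>
        have := (hstep k (r k)).1
        rw [hrsucc k]; push_cast; linarith
  have hrtend : Tendsto r atTop atTop := tendsto_atTop_mono hrge tendsto_natCast_atTop_atTop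
  -- the set A
  set A : Set ℂ := ⋃ n, ((C n ∩ sectorBall α (r (n+1))) \ sectorBall α (r n)) with hAdef
  have hAsub : A ⊆ sector α := iUnion_subset fun n t ht => (hCsub n) ht.1.1
  have hAmeas : MeasurableSet A :=
    MeasurableSet.iUnion fun n =>
      ((hCmeas n).inter (measurableSet_sectorBall _ _)).diff (measurableSet_sectorBall _ _)
  -- upper density of A is 1
  have hAu : udens α A = 1 := by
    apply udens_eq_one_of_freq
    intro ε hε
    rw [frequently_atTop]
    intro a
    -- choose a suitable index n
    have hev1 : ∀ᶠ n : ℕ in atTop, 1/((n:ℝ)+1) < ε/2 := by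
      have := tendsto_one_div_add_atTop_nhds_zero_nat (𝕜 := ℝ)
      exact this.eventually (Iio_mem_nhds (by linarith))
    have hev2 : ∀ᶠ n : ℕ in atTop, Real.pi/(c*((n:ℝ)+2)^2) < ε/2 := by
      have ht : Tendsto (fun n : ℕ => Real.pi/(c*((n:ℝ)+2)^2)) atTop (nhds 0) := by
        apply Tendsto.div_atTop (tendsto_const_nhds)
        apply Tendsto.const_mul_atTop hcpos
        apply tendsto_atTop_mono (fun n : ℕ => ?_) tendsto_natCast_atTop_atTop
        nlinarith [Nat.cast_nonneg (α := ℝ) n]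
      exact ht.eventually (Iio_mem_nhds (by linarith))
    have hev3 : ∀ᶠ n : ℕ in atTop, a ≤ r (n+1) := by
      have := hrtend.comp (tendsto_add_atTop_nat 1)
      exact this.eventually_ge_atTop a
    obtain ⟨n, ⟨hn1, hn2⟩, hn3⟩ := ((hev1.and hev2).and hev3).exists
    refine ⟨r (n+1), hn3, ?_⟩
    -- the correction term
    have hrn1 : 1 ≤ r n := hr1 n
    have hrnpos : 0 < r n := by linarith
    have hnum : (volume (sectorBall α (r n))).toReal ≤ (r n)^2 * Real.pi :=
      volume_sectorBall_ub_real α (by linarith)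
    have hden : c * (((n:ℝ)+2) * r n)^2 ≤ (volume (sectorBall α (r (n+1)))).toReal := by
      have hlb := volume_sectorBall_lb_real hα hα' (show 0 < r (n+1) by linarith [hr1 (n+1)])
      have hge2 : ((n:ℝ)+2) * r n ≤ r (n+1) := by
        rw [hrsucc n]; exact (hstep n (r n)).2
      have h0 : 0 ≤ ((n:ℝ)+2) * r n := by positivity
      calc c * (((n:ℝ)+2) * r n)^2 ≤ c * (r (n+1))^2 :=
        mul_le_mul_of_nonneg_left (pow_le_pow_left₀ h0 hge2 2) hcpos.le
      _ = (Real.sin α / 8 * r (n+1)) ^ 2 * Real.pi := by rw [hc]; ring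
      _ ≤ _ := hlb
    have hcorr : (volume (sectorBall α (r n))).toReal /
        (volume (sectorBall α (r (n+1)))).toReal < ε/2 := by
      have hd1 : (volume (sectorBall α (r n))).toReal /
          (volume (sectorBall α (r (n+1)))).toReal
          ≤ ((r n)^2 * Real.pi) / (c * (((n:ℝ)+2) * r n)^2) := by
        apply div_le_div₀ (by positivity) hnum (by positivity) hden
      have hd2 : ((r n)^2 * Real.pi) / (c * (((n:ℝ)+2) * r n)^2)
          = Real.pi/(c*((n:ℝ)+2)^2) := by
        field_simp
      rw [hd2] at hd1
      linarith
    -- the inclusion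
    have hincl : C n ∩ sectorBall α (r (n+1)) ⊆ A ∪ sectorBall α (r n) := by
      intro t ht
      by_cases hB : t ∈ sectorBall α (r n)
      · exact Or.inr hB
      · exact Or.inl (mem_iUnion.mpr ⟨n, ⟨ht, hB⟩⟩)
    have hd := dratio_diff (α := α) hincl
    have hstepd' := hstepd n (r n)
    rw [← hrsucc n] at hstepd'
    linarith
  -- tendsto 0 along A
  have hAt : Tendsto (fun t => ‖S.T t v‖) (alongAbs A) (nhds 0) := by
    rw [Metric.tendsto_nhds]
    intro ε hε
    obtain ⟨N, hN⟩ := exists_nat_one_div_lt hε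
    have hmem1 : (fun z => ‖z‖) ⁻¹' (Ici (r N)) ∈
        atTop.comap (fun z : ℂ => ‖z‖) :=
      preimage_mem_comap (Ici_mem_atTop _)
    refine mem_of_superset
      (inter_mem (mem_inf_of_left hmem1) (mem_inf_of_right (mem_principal_self A))) ?_
    rintro t ⟨htb, htA⟩
    obtain ⟨n, htn⟩ := mem_iUnion.mp htA
    have habs : ‖t‖ < r (n+1) := htn.1.2.2
    have hNn : N ≤ n := by
      have h4 : r N < r (n+1) := lt_of_le_of_lt htb habs
      have h5 : N < n + 1 := hrmono.lt_iff_lt.mp h4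
      omega
    have hsmall : ‖S.T t v‖ < 1/((n:ℝ)+1) := htn.1.1.2
    have hmono : 1/((n:ℝ)+1) ≤ 1/((N:ℝ)+1) :=
      one_div_le_one_div_of_le (by positivity) (by exact_mod_cast Nat.succ_le_succ hNn)
    show dist ‖S.T t v‖ 0 < ε
    rw [Real.dist_0_eq_abs, abs_of_nonneg (norm_nonneg _)]
    linarith
  refine ⟨A, B, hAsub, fun t ht => ht.1, hAmeas, ?_, hAu, hBu, hAt, δ, hδ, fun t ht => ht.2.le⟩
  exact measurableSet_sep (S.cont' v) (isOpen_lt continuous_const continuous_norm)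

lemma chaotic_pair_of_semiirr (hα : 0 < α) (hα' : α < Real.pi / 2)
    (S : CZeroSemigroup α 𝕜 X) {x y : X} (h : DistSemiIrregular S (x - y)) :
    DistChaoticPair S x y := by
  obtain ⟨A, B, hA, hB, _, _, hAu, hBu, hAt, δ, hδ, hδB⟩ := h
  refine ⟨δ/2, by linarith, fun ε hε => ⟨?_, ?_⟩⟩
  · obtain ⟨b, hb⟩ := exists_bound_of_alongAbs hε hAt
    apply udens_eq_one_mono (A := A ∩ {t | b ≤ ‖t‖}) ?_
      (udens_inter_abs_ge hα hα' hA hAu b)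
    rintro t ⟨htA, htb⟩
    refine ⟨hA htA, ?_⟩
    have h2 := hb t htb htA
    rw [← map_sub]
    exact h2
  · apply udens_eq_one_mono (A := B) ?_ hBu
    intro t ht
    refine ⟨hB ht, ?_⟩
    have h2 := hδB t ht
    rw [← map_sub]
    linarith

/-- A residual distributionally scrambled set forces the whole space to be scrambled. -/
theorem stmt_13 (α : ℝ) (hα : 0 < α) (hα' : α < Real.pi / 2)
    {𝕜 X : Type*} [NontriviallyNormedField 𝕜] [NormedAddCommGroup X] [NormedSpace 𝕜 X]
    [CompleteSpace X] (S : CZeroSemigroup α 𝕜 X) :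
    ((∃ K : Set X, DistScrambled S K ∧ ∃ G ⊆ K, IsGδ G ∧ Dense G) ↔
      (∀ x : X, x ≠ 0 → DistSemiIrregular S x)) ∧
    ((∃ K : Set X, DistScrambled S K ∧ ∃ G ⊆ K, IsGδ G ∧ Dense G) ↔
      DistScrambled S (Set.univ : Set X)) := by
  have h1 : DistScrambled S (Set.univ : Set X) →
      (∃ K : Set X, DistScrambled S K ∧ ∃ G ⊆ K, IsGδ G ∧ Dense G) :=
    fun h => ⟨Set.univ, h, Set.univ, subset_rfl, IsGδ.univ, dense_univ⟩
  have h3 : (∀ x : X, x ≠ 0 → DistSemiIrregular S x) →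
      DistScrambled S (Set.univ : Set X) := by
    intro h x _ y _ hxy
    exact chaotic_pair_of_semiirr hα hα' S (h (x - y) (sub_ne_zero.mpr hxy))
  have h2 : (∃ K : Set X, DistScrambled S K ∧ ∃ G ⊆ K, IsGδ G ∧ Dense G) →
      ∀ x : X, x ≠ 0 → DistSemiIrregular S x := by
    rintro ⟨K, hK, G, hGK, hGδ, hGd⟩ x hx
    have hGd' : Dense ((fun w => w + x) ⁻¹' G) :=
      hGd.preimage (Homeomorph.addRight x).isOpenMap
    have hGδ' : IsGδ ((fun w => w + x) ⁻¹' G) :=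
      isGδ_preimage (continuous_add_right x) hGδ
    obtain ⟨w, hwG, hwpre⟩ := (Dense.inter_of_Gδ hGδ hGδ' hGd hGd').nonempty
    have hwx : w + x ∈ G := hwpre
    have hne : w + x ≠ w := fun hcon => hx (add_eq_left.mp hcon)
    obtain ⟨δ, hδ, hpp⟩ := hK (w + x) (hGK hwx) w (hGK hwG) hne
    have hTx : ∀ t : ℂ, S.T t (w + x) - S.T t w = S.T t x := fun t => by
      rw [map_add, add_sub_cancel_left]
    apply semiirr_construct hα hα' S x
    · intro ε hε
      have hc := (hpp ε hε).1
      have hset : {t ∈ sector α | ‖S.T t (w+x) - S.T t w‖ < ε}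
          = {t ∈ sector α | ‖S.T t x‖ < ε} := by
        ext t; rw [mem_setOf_eq, mem_setOf_eq, hTx t]
      rwa [hset] at hc
    · refine ⟨δ, hδ, ?_⟩
      have hc := (hpp 1 one_pos).2
      have hset : {t ∈ sector α | δ < ‖S.T t (w+x) - S.T t w‖}
          = {t ∈ sector α | δ < ‖S.T t x‖} := by
        ext t; rw [mem_setOf_eq, mem_setOf_eq, hTx t]
      rwa [hset] at hc
  exact ⟨⟨h2, fun h => h1 (h3 h)⟩, ⟨fun hK => h3 (h2 hK), h1⟩⟩
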